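/- Let S be the collection of finite subsets of ℕ₊ partially ordered by set inclusion, let f be a PDF on S with support S and constant rate α (f(x) = α ∑_{y ⊇ x} f(y) for all x ∈ S), and let p_k = ∑_{x : #(x) = k} f(x) be the distribution of the cardinality U = #(X). Assume ∑_{j=0}^∞ C(j,k) p_j < ∞ for every k ∈ ℕ. Then for every k ∈ ℕ, α p_k = ∑_{j=0}^∞ (−1)^{j+k} C(j,k) p_j, i.e. α P(U = k) = E[(−1)^{U+k} C(U,k)]. -/

import Mathlib

open scoped ENNReal NNReal

lemma alt_choose_real (n : ℕ) :
    ∑ m ∈ Finset.range (n+1), (-1:ℝ)^m * (n.choose m : ℝ) = if n = 0 then 1 else 0 := by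
  have h := Int.alternating_sum_range_choose (n := n)
  have := congrArg (fun z : ℤ => (z : ℝ)) h
  push_cast at this
  simpa using this

lemma triple_identity (i k : ℕ) :
    ∑ j ∈ Finset.range (i+1), (-1:ℝ)^(j+k) * (j.choose k : ℝ) * (i.choose j : ℝ)
      = if i = k then 1 else 0 := by
  rcases lt_or_ge i k with h | h
  · rw [if_neg (by omega)]
    apply Finset.sum_eq_zero
    intro j hj
    simp only [Finset.mem_range] at hj
    rw [Nat.choose_eq_zero_of_lt (by omega)]
    ring
  · -- k ≤ i
    have key : ∀ j ∈ Finset.range (i+1),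
        (-1:ℝ)^(j+k) * (j.choose k : ℝ) * (i.choose j : ℝ)
        = if j ∈ Finset.Icc k i then (-1:ℝ)^(j+k) * ((i.choose k : ℝ) * ((i-k).choose (j-k) : ℝ)) else 0 := by
      intro j hj
      simp only [Finset.mem_range] at hj
      by_cases hjk : k ≤ j
      · rw [if_pos (Finset.mem_Icc.2 ⟨hjk, by omega⟩)]
        have := Nat.choose_mul (n := i) (k := j) (s := k) hjk
        have : (i.choose j : ℝ) * (j.choose k : ℝ) = (i.choose k : ℝ) * ((i-k).choose (j-k) : ℝ) := by
          exact_mod_cast congrArg (fun z : ℕ => (z : ℝ)) this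
        rw [mul_assoc, mul_comm ((j.choose k : ℝ)), this]
      · rw [if_neg (by simp [Finset.mem_Icc]; omega), Nat.choose_eq_zero_of_lt (by omega)]
        ring
    rw [Finset.sum_congr rfl key]
    rw [Finset.sum_ite_mem, Finset.range_eq_Ico]
    have hinter : Finset.Ico 0 (i+1) ∩ Finset.Icc k i = Finset.Icc k i := by
      apply Finset.inter_eq_right.2
      intro j hj
      simp only [Finset.mem_Icc] at hj
      simp only [Finset.mem_Ico]
      omega
    rw [hinter]
    have hre : ∑ j ∈ Finset.Icc k i, (-1:ℝ)^(j+k) * ((i.choose k : ℝ) * ((i-k).choose (j-k) : ℝ))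
        = ∑ m ∈ Finset.range (i-k+1), (-1:ℝ)^m * ((i.choose k : ℝ) * ((i-k).choose m : ℝ)) := by
      rw [Finset.sum_bij (fun j _ => j - k)]
      · intro j hj; simp only [Finset.mem_Icc] at hj; simp only [Finset.mem_range]; omega
      · intro a ha b hb; simp only [Finset.mem_Icc] at ha hb; omega
      · intro m hm; simp only [Finset.mem_range] at hm
        exact ⟨m + k, Finset.mem_Icc.2 ⟨by omega, by omega⟩, by omega⟩
      · intro j hj; simp only [Finset.mem_Icc] at hj
        congr 1
        have : j + k = (j - k) + 2 * k := by omega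
        rw [this, pow_add, pow_mul]
        simp
    rw [hre]
    have : ∑ m ∈ Finset.range (i-k+1), (-1:ℝ)^m * ((i.choose k : ℝ) * ((i-k).choose m : ℝ))
        = (i.choose k : ℝ) * ∑ m ∈ Finset.range (i-k+1), (-1:ℝ)^m * ((i-k).choose m : ℝ) := by
      rw [Finset.mul_sum]; apply Finset.sum_congr rfl; intro m _; ring
    rw [this, alt_choose_real]
    by_cases hik : i = k
    · simp [hik]
    · rw [if_neg (by omega), if_neg hik, mul_zero]
open scoped ENNReal

lemma card_partition (g : Finset ℕ+ → ℝ≥0∞) :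
    ∑' y : Finset ℕ+, g y = ∑' (j : ℕ) (y : {y : Finset ℕ+ // y.card = j}), g y.1 := by
  rw [← ENNReal.tsum_sigma]
  exact (Equiv.tsum_eq (Equiv.sigmaFiberEquiv Finset.card) (fun z => g z)).symm

def pairEquiv (k : ℕ) : (Σ y : Finset ℕ+, {x : Finset ℕ+ // x ∈ Finset.powersetCard k y})
    ≃ (Σ x : {x : Finset ℕ+ // x.card = k}, {y : Finset ℕ+ // x.1 ⊆ y}) where
  toFun z := ⟨⟨z.2.1, ((Finset.mem_powersetCard).1 z.2.2).2⟩,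
    ⟨z.1, ((Finset.mem_powersetCard).1 z.2.2).1⟩⟩
  invFun z := ⟨z.2.1, ⟨z.1.1, (Finset.mem_powersetCard).2 ⟨z.2.2, z.1.2⟩⟩⟩
  left_inv z := rfl
  right_inv z := rfl

lemma fubini_sets (f : Finset ℕ+ → ℝ≥0∞) (k : ℕ) :
    ∑' (x : {x : Finset ℕ+ // x.card = k}) (y : {y : Finset ℕ+ // x.1 ⊆ y}), f y.1
      = ∑' y : Finset ℕ+, (y.card.choose k : ℝ≥0∞) * f y := by
  rw [← ENNReal.tsum_sigma]
  rw [← Equiv.tsum_eq (pairEquiv k) (fun z => f z.2.1)]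
  have hc : ∀ c : (Σ y : Finset ℕ+, {x : Finset ℕ+ // x ∈ Finset.powersetCard k y}),
      f ((pairEquiv k) c).2.1 = f c.1 := by rintro ⟨y, x⟩; rfl
  rw [tsum_congr hc]
  rw [ENNReal.tsum_sigma (f := fun y (_ : {x : Finset ℕ+ // x ∈ Finset.powersetCard k y}) => f y)]
  apply tsum_congr
  intro y
  rw [tsum_fintype]
  simp [Finset.sum_const, Finset.card_univ, Fintype.card_coe, Finset.card_powersetCard,
    nsmul_eq_mul]


set_option maxHeartbeats 1000000 in
/-- Let `S` be the poset of finite subsets of `ℕ₊` ordered by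
inclusion, let `f` be a PDF on `S` with support `S` and constant rate `α`, and let
`p k = P(#(X) = k)` be the distribution of the cardinality of the random set. If the
binomial moments `∑_j C(j,k) p_j` are all finite, then
`α p_k = ∑_{j} (−1)^{j+k} C(j,k) p_j`, i.e. `α P(U = k) = E[(−1)^{U+k} C(U,k)]`. -/
theorem subsets_constantRate_cardinality_identity
    (f : Finset ℕ+ → ℝ≥0)
    (hsupp : ∀ x : Finset ℕ+, 0 < f x)
    (hpdf : ∑' x : Finset ℕ+, (f x : ℝ≥0∞) = 1)
    (α : ℝ) (hα : 0 < α)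
    (hrate : ∀ x : Finset ℕ+,
      (f x : ℝ≥0∞) = ENNReal.ofReal α * ∑' y : {y : Finset ℕ+ // x ⊆ y}, (f y : ℝ≥0∞))
    (p : ℕ → ℝ)
    (hp : ∀ k : ℕ, p k = ∑' x : {x : Finset ℕ+ // x.card = k}, (f x : ℝ))
    (hmoment : ∀ k : ℕ, Summable (fun j : ℕ => (j.choose k : ℝ) * p j)) :
    ∀ k : ℕ, α * p k = ∑' j : ℕ, (-1 : ℝ) ^ (j + k) * (j.choose k : ℝ) * p j := by
  classical
  -- the ENNReal cardinality distribution
  set P : ℕ → ℝ≥0∞ := fun j => ∑' x : {x : Finset ℕ+ // x.card = j}, (f x : ℝ≥0∞) with hPdef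
  have hPtop : ∀ j, P j ≠ ∞ := by
    intro j
    have hle : P j ≤ 1 := by
      rw [← hpdf, hPdef]
      exact ENNReal.tsum_comp_le_tsum_of_injective Subtype.val_injective
        (fun x => (f x : ℝ≥0∞))
    exact (lt_of_le_of_lt hle ENNReal.one_lt_top).ne
  have hkey : ∀ j, P j = ENNReal.ofReal α * ∑' i : ℕ, (Nat.choose i j : ℝ≥0∞) * P i := by
    intro j
    have h1 : P j = ENNReal.ofReal α *
        ∑' (x : {x : Finset ℕ+ // x.card = j}) (y : {y : Finset ℕ+ // x.1 ⊆ y}),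
          ((f y.1 : ℝ≥0∞)) := by
      rw [hPdef]
      simp only
      rw [tsum_congr (fun x : {x : Finset ℕ+ // x.card = j} => hrate x.1)]
      exact (ENNReal.tsum_mul_left (a := ENNReal.ofReal α)
        (f := fun x : {x : Finset ℕ+ // x.card = j} =>
          ∑' y : {y : Finset ℕ+ // x.1 ⊆ y}, (f y.1 : ℝ≥0∞)))
    rw [h1, fubini_sets (fun s => (f s : ℝ≥0∞)) j]
    congr 1
    rw [card_partition (fun y => (y.card.choose j : ℝ≥0∞) * (f y : ℝ≥0∞))]
    apply tsum_congr
    intro i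
    have h2 : ∀ y : {y : Finset ℕ+ // y.card = i},
        ((y.1.card.choose j : ℝ≥0∞)) * (f y.1 : ℝ≥0∞)
          = (i.choose j : ℝ≥0∞) * (f y.1 : ℝ≥0∞) := fun y => by rw [y.2]
    rw [tsum_congr h2, ENNReal.tsum_mul_left]
  have hofα : (ENNReal.ofReal α) ≠ 0 := (ENNReal.ofReal_pos.2 hα).ne'
  have hBtop : ∀ j, (∑' i : ℕ, (Nat.choose i j : ℝ≥0∞) * P i) ≠ ∞ := by
    intro j htop
    have h := hkey j
    rw [htop, ENNReal.mul_top hofα] at h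
    exact hPtop j h
  have hpP : ∀ j, p j = (P j).toReal := by
    intro j
    rw [hp j, hPdef]
    simp only
    rw [ENNReal.tsum_toReal_eq (fun _ => ENNReal.coe_ne_top)]
    simp
  have hpnn : ∀ j, 0 ≤ p j := fun j => (hpP j) ▸ ENNReal.toReal_nonneg
  set b : ℕ → ℝ := fun j => ∑' i : ℕ, (Nat.choose i j : ℝ) * p i with hbdef
  have hpb : ∀ j, p j = α * b j := by
    intro j
    have h1 := congrArg ENNReal.toReal (hkey j)
    rw [ENNReal.toReal_mul, ENNReal.toReal_ofReal hα.le] at h1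
    have h2 : (∑' i : ℕ, (Nat.choose i j : ℝ≥0∞) * P i).toReal = b j := by
      rw [ENNReal.tsum_toReal_eq (fun i => ENNReal.mul_ne_top (ENNReal.natCast_ne_top _) (hPtop i))]
      apply tsum_congr
      intro i
      rw [ENNReal.toReal_mul, ENNReal.toReal_natCast, ← hpP i]
    rw [h2] at h1
    rw [hpP j, h1]
  intro k
  have hbj : ∀ j, b j = p j / α := fun j => by
    rw [hpb j]; field_simp
  -- the dominating nonnegative function on pairs
  set G : ℕ × ℕ → ℝ := fun z => (z.1.choose k : ℝ) * ((z.2.choose z.1 : ℝ) * p z.2) with hGdef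
  have hGnn : 0 ≤ G := fun z =>
    mul_nonneg (Nat.cast_nonneg _) (mul_nonneg (Nat.cast_nonneg _) (hpnn _))
  have hrow : ∀ j, Summable fun i => G (j, i) := by
    intro j
    have := (hmoment j).mul_left ((j.choose k : ℝ))
    exact this.congr (fun i => by rw [hGdef])
  have hrowsum : ∀ j, (∑' i, G (j, i)) = (j.choose k : ℝ) * b j := by
    intro j
    simp only [hGdef, hbdef]
    exact tsum_mul_left
  have hGsum : Summable G := by
    rw [summable_prod_of_nonneg hGnn]
    refine ⟨hrow, ?_⟩
    have : Summable fun j => (j.choose k : ℝ) * b j := by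
      apply ((hmoment k).div_const α).congr
      intro j
      rw [hbj j]; ring
    exact this.congr (fun j => ((hrowsum j).symm : (j.choose k : ℝ) * b j = ∑' i, G (j, i)))
  -- the signed function
  set g : ℕ × ℕ → ℝ := fun z =>
    (-1 : ℝ) ^ (z.1 + k) * (z.1.choose k : ℝ) * ((z.2.choose z.1 : ℝ) * p z.2) with hgdef
  have hgabs : ∀ z, ‖g z‖ ≤ G z := by
    intro z
    rw [hgdef, hGdef]
    simp only [Real.norm_eq_abs, abs_mul, abs_pow, abs_neg, abs_one, one_pow, one_mul,
      Nat.abs_cast]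
    rw [abs_of_nonneg (hpnn _)]
  have hgsum : Summable g := Summable.of_norm_bounded hGsum hgabs
  set g' : ℕ → ℕ → ℝ := fun j i => g (j, i) with hg'def
  have hgrow : ∀ j, Summable (g' j) := by
    intro j
    have := (hmoment j).mul_left ((-1 : ℝ) ^ (j + k) * (j.choose k : ℝ))
    exact this.congr (fun i => by simp only [hg'def, hgdef])
  have hgcol : ∀ i, Summable fun j => g' j i := by
    intro i
    apply summable_of_ne_finset_zero (s := Finset.range (i + 1))
    intro j hj
    simp only [Finset.mem_range, not_lt] at hj
    rw [hg'def, hgdef]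
    simp only
    rw [Nat.choose_eq_zero_of_lt (show i < j by omega)]
    push_cast; ring
  have hcomm : (∑' (i) (j), g' j i) = ∑' (j) (i), g' j i :=
    Summable.tsum_comm' hgsum hgrow hgcol
  have hleft : (∑' (i : ℕ) (j : ℕ), g' j i) = p k := by
    have hinner : ∀ i : ℕ, (∑' j : ℕ, g' j i) = (if i = k then 1 else 0) * p i := by
      intro i
      rw [tsum_eq_sum (s := Finset.range (i + 1)) (fun j hj => by
        simp only [Finset.mem_range, not_lt] at hj
        rw [hg'def, hgdef]; simp only
        rw [Nat.choose_eq_zero_of_lt (show i < j by omega)]; push_cast; ring)]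
      have : ∀ j ∈ Finset.range (i + 1),
          g' j i = ((-1 : ℝ) ^ (j + k) * (j.choose k : ℝ) * (i.choose j : ℝ)) * p i := by
        intro j _; rw [hg'def, hgdef]; simp only; ring
      rw [Finset.sum_congr rfl this, ← Finset.sum_mul, triple_identity]
    rw [tsum_congr hinner, tsum_eq_single k (fun i hi => by rw [if_neg hi, zero_mul])]
    rw [if_pos rfl, one_mul]
  have hright : (∑' (j : ℕ) (i : ℕ), g' j i)
      = ∑' j : ℕ, (-1 : ℝ) ^ (j + k) * (j.choose k : ℝ) * b j := by
    apply tsum_congr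
    intro j
    have : ∀ i : ℕ, g' j i = ((-1 : ℝ) ^ (j + k) * (j.choose k : ℝ)) * ((i.choose j : ℝ) * p i) := by
      intro i; rw [hg'def, hgdef]
    rw [tsum_congr this, tsum_mul_left, hbdef]
  -- conclude
  have hfin : (∑' j : ℕ, (-1 : ℝ) ^ (j + k) * (j.choose k : ℝ) * p j)
      = α * ∑' j : ℕ, (-1 : ℝ) ^ (j + k) * (j.choose k : ℝ) * b j := by
    rw [← tsum_mul_left]
    apply tsum_congr
    intro j
    rw [hpb j]; ring
  rw [hfin, ← hright, ← hcomm, hleft]
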